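/- Let $q > b \geq 1$ be integers and let $\alpha^1,\ldots,\alpha^b \in \mathbb{R}^q$ be probability vectors satisfying $\frac{1}{q-1}(1-\frac{1}{q-b}) \leq \alpha^i_j \leq \frac{1}{q-1}$ for all $i,j$. Then $\sum_{j=1}^q \prod_{i=1}^b \alpha^i_j \geq \frac{q}{(q-1)^b}\left(1-\frac{1}{q-b}\right)^{b - b^2/q}$. -/

import Mathlib

open Finset

private lemma convexOn_const_rpow {a : ℝ} (ha : 0 < a) :
    ConvexOn ℝ Set.univ (fun t : ℝ => a ^ t) := by
  refine ⟨convex_univ, fun x _ y _ μ ν hμ hν hμν => ?_⟩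
  simp only [smul_eq_mul]
  have h1 : a ^ (μ * x + ν * y) = (a ^ x) ^ μ * (a ^ y) ^ ν := by
    rw [Real.rpow_add ha, ← Real.rpow_mul ha.le x μ, ← Real.rpow_mul ha.le y ν,
      mul_comm x μ, mul_comm y ν]
  rw [h1]
  exact Real.geom_mean_le_arith_mean2_weighted hμ hν
    (Real.rpow_nonneg ha.le x) (Real.rpow_nonneg ha.le y) hμν

theorem stmt_3 (q b : ℕ) (hb : 1 ≤ b) (hqb : b < q)
    (α : Fin b → Fin q → ℝ)
    (hsum : ∀ i, ∑ j, α i j = 1)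
    (hlb : ∀ i j, (1 / ((q : ℝ) - 1)) * (1 - 1 / ((q : ℝ) - b)) ≤ α i j)
    (hub : ∀ i j, α i j ≤ 1 / ((q : ℝ) - 1)) :
    ∑ j, ∏ i, α i j ≥
      ((q : ℝ) / ((q : ℝ) - 1) ^ b) *
        (1 - 1 / ((q : ℝ) - b)) ^ ((b : ℝ) - (b : ℝ) ^ 2 / (q : ℝ)) := by
  have hbR : (1 : ℝ) ≤ b := by exact_mod_cast hb
  have hqbR : (b : ℝ) < q := by exact_mod_cast hqb
  have hq0 : (0 : ℝ) < q := lt_of_le_of_lt (by linarith) hqbR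
  have hA : (0 : ℝ) < (q : ℝ) - 1 := by linarith
  have hD : (0 : ℝ) < (q : ℝ) - b := by linarith
  set A : ℝ := (q : ℝ) - 1 with hAdef
  set D : ℝ := (q : ℝ) - b with hDdef
  have hD1 : (1 : ℝ) ≤ D := by
    have : (b : ℝ) + 1 ≤ q := by exact_mod_cast hqb
    simp only [hDdef]; linarith
  have hexp : (b : ℝ) - (b : ℝ) ^ 2 / q = (b : ℝ) * D / q := by
    field_simp [hDdef]; ring
  rcases eq_or_lt_of_le hD1 with hc | hc
  · -- q - b = 1 : RHS is zero
    have hbase : (1 : ℝ) - 1 / D = 0 := by rw [← hc]; norm_num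
    have hepos : (0 : ℝ) < (b : ℝ) - (b : ℝ) ^ 2 / q := by
      rw [hexp]; positivity
    rw [hbase, Real.zero_rpow (ne_of_gt hepos), mul_zero]
    refine Finset.sum_nonneg fun j _ => Finset.prod_nonneg fun i _ => ?_
    refine le_trans ?_ (hlb i j)
    rw [hbase]; simp
  · -- main case : 1 < D
    set a : ℝ := 1 - 1 / D with hadef
    have hDpos : (0 : ℝ) < D := hD
    have hεlt : 1 / D < 1 := by rw [div_lt_one hDpos]; exact hc
    have ha0 : 0 < a := by simp only [hadef]; linarith
    set t : Fin b → Fin q → ℝ := fun i j => (1 - A * α i j) * D with htdef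
    have ht0 : ∀ i j, 0 ≤ t i j := by
      intro i j
      have h1 : A * α i j ≤ 1 := by
        have := hub i j
        calc A * α i j ≤ A * (1 / A) := by nlinarith
          _ = 1 := by field_simp
      simp only [htdef]; nlinarith
    have ht1 : ∀ i j, t i j ≤ 1 := by
      intro i j
      have h1 : 1 - 1 / D ≤ A * α i j := by
        have := hlb i j
        calc (1 : ℝ) - 1 / D = A * (1 / A * (1 - 1 / D)) := by field_simp
          _ ≤ A * α i j := by nlinarith
      simp only [htdef]
      calc (1 - A * α i j) * D ≤ (1 / D) * D := by nlinarith
        _ = 1 := by field_simp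
    have hkey : ∀ i j, (1 / A) * a ^ t i j ≤ α i j := by
      intro i j
      have h1 : a ^ t i j ≤ 1 + t i j * (-(1 / D)) := by
        have := rpow_one_add_le_one_add_mul_self
          (s := -(1 / D)) (by linarith) (ht0 i j) (ht1 i j)
        calc a ^ t i j = (1 + -(1 / D)) ^ t i j := by
              rw [show a = 1 + -(1 / D) by rw [hadef]; ring]
          _ ≤ 1 + t i j * (-(1 / D)) := this
      have h2 : 1 + t i j * (-(1 / D)) = A * α i j := by
        simp only [htdef]
        field_simp
        ring
      rw [h2] at h1
      calc (1 / A) * a ^ t i j ≤ (1 / A) * (A * α i j) :=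
            mul_le_mul_of_nonneg_left h1 (by positivity)
        _ = α i j := by field_simp
    set T : Fin q → ℝ := fun j => ∑ i, t i j with hTdef
    have hTsum : ∑ j, T j = (b : ℝ) * D := by
      simp only [hTdef]
      rw [Finset.sum_comm]
      have : ∀ i : Fin b, ∑ j, t i j = D := by
        intro i
        simp only [htdef]
        rw [← Finset.sum_mul, Finset.sum_sub_distrib, ← Finset.mul_sum, hsum i]
        simp [hAdef]
      rw [Finset.sum_congr rfl fun i _ => this i]
      simp [mul_comm]
    -- Jensen
    have hq0' : (q : ℝ) ≠ 0 := ne_of_gt hq0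
    have hjensen : a ^ ((b : ℝ) * D / q) ≤ ∑ j, (1 / (q : ℝ)) * a ^ T j := by
      have := (convexOn_const_rpow ha0).map_sum_le
        (t := Finset.univ) (w := fun _ : Fin q => 1 / (q : ℝ)) (p := T)
        (fun i _ => by positivity)
        (by simp [Finset.card_univ]; field_simp)
        (fun i _ => Set.mem_univ _)
      have harg : ∑ j, (1 / (q : ℝ)) • T j = (b : ℝ) * D / q := by
        simp only [smul_eq_mul, ← Finset.mul_sum, hTsum]
        ring
      rw [harg] at this
      simpa using this
    have hstep : ∀ j, (1 / A) ^ b * a ^ T j ≤ ∏ i, α i j := by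
      intro j
      calc (1 / A) ^ b * a ^ T j = ∏ i : Fin b, (1 / A) * a ^ t i j := by
            rw [Finset.prod_mul_distrib, Finset.prod_const, Finset.card_univ,
              Fintype.card_fin, Real.rpow_sum_of_pos ha0]
        _ ≤ ∏ i, α i j := Finset.prod_le_prod
            (fun i _ => by positivity) (fun i _ => hkey i j)
    rw [ge_iff_le, hexp]
    calc ((q : ℝ) / A ^ b) * a ^ ((b : ℝ) * D / q)
        ≤ ((q : ℝ) / A ^ b) * ∑ j, (1 / (q : ℝ)) * a ^ T j := by
          have hpos : (0:ℝ) < (q : ℝ) / A ^ b := by positivity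
          exact mul_le_mul_of_nonneg_left hjensen hpos.le
      _ = ∑ j, (1 / A) ^ b * a ^ T j := by
          rw [Finset.mul_sum]
          refine Finset.sum_congr rfl fun j _ => ?_
          field_simp
          ring
          rw [← mul_pow, mul_inv_cancel₀ (ne_of_gt hA), one_pow]
      _ ≤ ∑ j, ∏ i, α i j := Finset.sum_le_sum fun j _ => hstep j
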